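/- Coherence inductive step: in a complete binary tree of depth K with prices μ, fix level ℓ < K and suppose all pairs of levels k, m with ℓ < k ≤ m ≤ K are mutually coherent (μ_z = Σ_{u∈Z_m, u⊆z} μ_u for z ∈ Z_k). If for every y ∈ Z_ℓ the constraint (Σ_{k>ℓ} b_k)·μ_y = Σ_{k>ℓ} b_k·Σ_{z∈Z_k, z⊂y} μ_z holds with all b_k > 0, then μ_y = μ_{left(y)} + μ_{right(y)} for all y ∈ Z_ℓ, i.e., levels ℓ and ℓ+1 are coherent. -/

import Mathlib

/-- Coherence inductive step: in a complete binary tree of depth `K` (level-`k` nodes are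
indices `z < 2^k`, and the level-`m` descendants of `z` are `[z·2^{m−k}, (z+1)·2^{m−k})`),
fix `ℓ < K` and suppose all pairs of levels `k ≤ m` strictly above `ℓ` are mutually coherent.
If every `y` at level `ℓ` satisfies the LCMM constraint
`(∑_{k>ℓ} b_k)·μ_y = ∑_{k>ℓ} b_k·∑_{z∈Z_k, z⊂y} μ_z` with all `b_k > 0`, then levels `ℓ`
and `ℓ+1` are coherent: `μ_y = μ_{left(y)} + μ_{right(y)}`. -/
theorem coherence_inductive_step
    (K ℓ : ℕ) (hℓ : ℓ < K) (b : ℕ → ℝ) (hb : ∀ k, 1 ≤ k → k ≤ K → 0 < b k)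
    (μ : ℕ → ℕ → ℝ)
    (hcoh : ∀ k m, ℓ < k → k ≤ m → m ≤ K → ∀ z < 2 ^ k,
      μ k z = ∑ u ∈ Finset.Ico (z * 2 ^ (m - k)) ((z + 1) * 2 ^ (m - k)), μ m u)
    (hcon : ∀ y < 2 ^ ℓ,
      (∑ k ∈ Finset.Ioc ℓ K, b k) * μ ℓ y =
        ∑ k ∈ Finset.Ioc ℓ K, b k *
          ∑ z ∈ Finset.Ico (y * 2 ^ (k - ℓ)) ((y + 1) * 2 ^ (k - ℓ)), μ k z) :
    ∀ y < 2 ^ ℓ, μ ℓ y = μ (ℓ + 1) (2 * y) + μ (ℓ + 1) (2 * y + 1) := by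
  intro y hy
  have hy2 : 2 * y < 2 ^ (ℓ + 1) := by
    rw [pow_succ]; omega
  have hy2' : 2 * y + 1 < 2 ^ (ℓ + 1) := by
    rw [pow_succ]; omega
  -- each inner sum equals μ(ℓ+1)(2y) + μ(ℓ+1)(2y+1)
  have key : ∀ k ∈ Finset.Ioc ℓ K,
      (∑ z ∈ Finset.Ico (y * 2 ^ (k - ℓ)) ((y + 1) * 2 ^ (k - ℓ)), μ k z)
        = μ (ℓ + 1) (2 * y) + μ (ℓ + 1) (2 * y + 1) := by
    intro k hk
    simp only [Finset.mem_Ioc] at hk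
    have h1 : μ (ℓ + 1) (2 * y) =
        ∑ u ∈ Finset.Ico (2 * y * 2 ^ (k - (ℓ + 1))) ((2 * y + 1) * 2 ^ (k - (ℓ + 1))), μ k u :=
      hcoh (ℓ + 1) k (Nat.lt_succ_self ℓ) (by omega) hk.2 _ hy2
    have h2 : μ (ℓ + 1) (2 * y + 1) =
        ∑ u ∈ Finset.Ico ((2 * y + 1) * 2 ^ (k - (ℓ + 1))) ((2 * y + 1 + 1) * 2 ^ (k - (ℓ + 1))), μ k u :=
      hcoh (ℓ + 1) k (Nat.lt_succ_self ℓ) (by omega) hk.2 _ hy2'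
    have hkℓ : k - ℓ = (k - (ℓ + 1)) + 1 := by omega
    have e1 : 2 * y * 2 ^ (k - (ℓ + 1)) = y * 2 ^ (k - ℓ) := by
      rw [hkℓ, pow_succ]; ring
    have e2 : (2 * y + 1 + 1) * 2 ^ (k - (ℓ + 1)) = (y + 1) * 2 ^ (k - ℓ) := by
      rw [hkℓ, pow_succ]; ring
    rw [h1, h2, Finset.sum_Ico_consecutive _ (Nat.mul_le_mul_right _ (by omega))
      (Nat.mul_le_mul_right _ (by omega)), e1, e2]
  have hc := hcon y hy
  have hc2 : (∑ k ∈ Finset.Ioc ℓ K, b k *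
      ∑ z ∈ Finset.Ico (y * 2 ^ (k - ℓ)) ((y + 1) * 2 ^ (k - ℓ)), μ k z) =
      (∑ k ∈ Finset.Ioc ℓ K, b k) * (μ (ℓ + 1) (2 * y) + μ (ℓ + 1) (2 * y + 1)) := by
    rw [Finset.sum_mul]
    exact Finset.sum_congr rfl (fun k hk => by rw [key k hk])
  rw [hc2] at hc
  have hbpos : 0 < ∑ k ∈ Finset.Ioc ℓ K, b k := by
    apply Finset.sum_pos
    · intro k hk
      simp only [Finset.mem_Ioc] at hk
      exact hb k (by omega) hk.2
    · exact ⟨K, Finset.mem_Ioc.mpr ⟨hℓ, le_refl K⟩⟩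
  exact mul_left_cancel₀ (ne_of_gt hbpos) hc
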